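/- If a sequent Π_{Γ,Δ} ⊢ A⊗B (where Π_{Γ,Δ} is some permutation of the concatenation of Γ and Δ) is derivable in the system S, and the sequence Γ,A is prime to the sequence Δ,B, then both Γ ⊢ A and Δ ⊢ B are derivable in S. -/
import Mathlib

/-- Formulae of the system `S`: built from propositional letters and the constant `I`
(`unit`) with the binary connectives `⊗` (`tens`) and `→` (`imp`). -/
inductive Fml : Type
  | atom : ℕ → Fml
  | unit : Fml
  | tens : Fml → Fml → Fml
  | imp : Fml → Fml → Fml

/-- Derivability in the system `S`.  Sequents are `Γ ⊢ A` with `Γ` a finite list of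
formulae.  Axioms: `A ⊢ A` and `⊢ I`; structural rules: weakening, interchange and cut;
operational rules: `⊗⊢`, `⊢⊗`, `→⊢` and `⊢→`. -/
inductive SDeriv : List Fml → Fml → Prop
  | ax (A : Fml) : SDeriv [A] A
  | axI : SDeriv [] Fml.unit
  | weak {Γ A} : SDeriv Γ A → SDeriv (Fml.unit :: Γ) A
  | exch {Γ Δ : List Fml} {A B C} :
      SDeriv (Γ ++ A :: B :: Δ) C → SDeriv (Γ ++ B :: A :: Δ) C
  | cut {Γ Δ Θ : List Fml} {A B} :
      SDeriv Γ A → SDeriv (Δ ++ A :: Θ) B → SDeriv (Δ ++ Γ ++ Θ) B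
  | tensL {Γ Δ : List Fml} {A B C} :
      SDeriv (Γ ++ A :: B :: Δ) C → SDeriv (Γ ++ (A.tens B) :: Δ) C
  | tensR {Γ Δ : List Fml} {A B} :
      SDeriv Γ A → SDeriv Δ B → SDeriv (Γ ++ Δ) (A.tens B)
  | impL {Γ Δ : List Fml} {A B C} :
      SDeriv Γ A → SDeriv (B :: Δ) C → SDeriv (Γ ++ (A.imp B) :: Δ) C
  | impR {Γ : List Fml} {A B} :
      SDeriv (A :: Γ) B → SDeriv Γ (A.imp B)

/-- The propositional letter `p` occurs in the given formula. -/
def Fml.occurs (p : ℕ) : Fml → Prop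
  | .atom q => q = p
  | .unit => False
  | .tens A B => A.occurs p ∨ B.occurs p
  | .imp A B => A.occurs p ∨ B.occurs p

/-- `Γ` is prime to `Δ` when no propositional letter occurs both in a formula of `Γ`
and in a formula of `Δ`. -/
def PrimeTo (Γ Δ : List Fml) : Prop :=
  ∀ (p : ℕ), ∀ X ∈ Γ, ∀ Y ∈ Δ, X.occurs p → ¬Y.occurs p

/-! ### Auxiliary machinery -/

/-- Substitution of formulas for atoms. -/
def Fml.subst (σ : ℕ → Fml) : Fml → Fml
  | .atom p => σ p
  | .unit => .unit
  | .tens A B => .tens (A.subst σ) (B.subst σ)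
  | .imp A B => .imp (A.subst σ) (B.subst σ)

/-- Derivability is stable under permutation of the context (prefix version). -/
lemma SDeriv.perm_aux {Θ Θ' : List Fml} (hp : Θ.Perm Θ') :
    ∀ Γ C, SDeriv (Γ ++ Θ) C → SDeriv (Γ ++ Θ') C := by
  induction hp with
  | nil => exact fun Γ C h => h
  | cons x _ ih =>
      intro Γ C h
      have := ih (Γ ++ [x]) C (by simpa using h)
      simpa using this
  | swap x y l =>
      intro Γ C h
      exact SDeriv.exch h
  | trans _ _ ih1 ih2 => exact fun Γ C h => ih2 Γ C (ih1 Γ C h)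

/-- Derivability is stable under permutation of the context. -/
lemma SDeriv.perm {Θ Θ' : List Fml} {C : Fml} (hp : Θ.Perm Θ')
    (h : SDeriv Θ C) : SDeriv Θ' C := SDeriv.perm_aux hp [] C h

/-- Derivability is stable under substitution. -/
lemma SDeriv.subst {Θ : List Fml} {C : Fml} (h : SDeriv Θ C) (σ : ℕ → Fml) :
    SDeriv (Θ.map (Fml.subst σ)) (C.subst σ) := by
  induction h with
  | ax A => exact SDeriv.ax _
  | axI => exact SDeriv.axI
  | weak _ ih => exact ih.weak
  | exch _ ih =>
      rename_i Γ Δ A B C _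
      have := SDeriv.exch (Γ := Γ.map (Fml.subst σ)) (Δ := Δ.map (Fml.subst σ))
        (A := A.subst σ) (B := B.subst σ) (by simpa using ih)
      simpa using this
  | cut _ _ ih1 ih2 =>
      rename_i Γ Δ Θ A B _ _
      have := SDeriv.cut (Δ := Δ.map (Fml.subst σ)) (Θ := Θ.map (Fml.subst σ))
        ih1 (by simpa using ih2)
      simpa using this
  | tensL _ ih =>
      rename_i Γ Δ A B C _
      have := SDeriv.tensL (Γ := Γ.map (Fml.subst σ)) (Δ := Δ.map (Fml.subst σ))
        (A := A.subst σ) (B := B.subst σ) (by simpa using ih)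
      simpa [Fml.subst] using this
  | tensR _ _ ih1 ih2 =>
      have := SDeriv.tensR ih1 ih2
      simpa [Fml.subst] using this
  | impL _ _ ih1 ih2 =>
      rename_i Γ Δ A B C _ _
      have := SDeriv.impL (Δ := Δ.map (Fml.subst σ)) ih1 ih2
      simpa [Fml.subst] using this
  | impR _ ih => exact SDeriv.impR ih

/-- A formula with no occurring atoms is provable from the empty context and can be
freely weakened into any context. -/
lemma const_lemma : ∀ X : Fml, (∀ p, ¬ X.occurs p) →
    SDeriv [] X ∧ ∀ Θ E, SDeriv Θ E → SDeriv (X :: Θ) E := by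
  intro X
  induction X with
  | atom p => exact fun h => absurd rfl (h p)
  | unit => exact fun _ => ⟨SDeriv.axI, fun Θ E h => h.weak⟩
  | tens A B ihA ihB =>
      intro h
      have hA := ihA (fun p hp => h p (Or.inl hp))
      have hB := ihB (fun p hp => h p (Or.inr hp))
      refine ⟨by simpa using SDeriv.tensR hA.1 hB.1, ?_⟩
      intro Θ E hd
      exact SDeriv.tensL (Γ := []) (hA.2 _ _ (hB.2 Θ E hd))
  | imp A B ihA ihB =>
      intro h
      have hA := ihA (fun p hp => h p (Or.inl hp))
      have hB := ihB (fun p hp => h p (Or.inr hp))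
      refine ⟨SDeriv.impR (hA.2 [] B hB.1), ?_⟩
      intro Θ E hd
      exact SDeriv.impL (Γ := []) hA.1 (hB.2 Θ E hd)

/-- A prefix of formulas each provable from the empty context can be removed. -/
lemma removeAll : ∀ (Ξ : List Fml), (∀ C ∈ Ξ, SDeriv [] C) →
    ∀ Γ E, SDeriv (Ξ ++ Γ) E → SDeriv Γ E := by
  intro Ξ
  induction Ξ with
  | nil => exact fun _ Γ E h => h
  | cons C Ξ ih =>
      intro hC Γ E h
      have h1 := SDeriv.cut (Δ := []) (Θ := Ξ ++ Γ) (hC C (by simp)) h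
      exact ih (fun D hD => hC D (by simp [hD])) Γ E (by simpa using h1)

lemma subst_eq_self {σ : ℕ → Fml} :
    ∀ X : Fml, (∀ p, X.occurs p → σ p = Fml.atom p) → X.subst σ = X := by
  intro X
  induction X with
  | atom p => intro h; exact h p rfl
  | unit => intro _; rfl
  | tens A B ihA ihB =>
      intro h
      simp only [Fml.subst]
      rw [ihA (fun p hp => h p (Or.inl hp)), ihB (fun p hp => h p (Or.inr hp))]
  | imp A B ihA ihB =>
      intro h
      simp only [Fml.subst]
      rw [ihA (fun p hp => h p (Or.inl hp)), ihB (fun p hp => h p (Or.inr hp))]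

lemma subst_const {σ : ℕ → Fml} :
    ∀ X : Fml, (∀ p, X.occurs p → σ p = Fml.unit) →
      ∀ q, ¬ (X.subst σ).occurs q := by
  intro X
  induction X with
  | atom p =>
      intro h q
      simp only [Fml.subst, h p rfl]
      exact fun hq => hq
  | unit => intro _ q hq; exact hq
  | tens A B ihA ihB =>
      intro h q hq
      rcases hq with hq | hq
      · exact ihA (fun p hp => h p (Or.inl hp)) q hq
      · exact ihB (fun p hp => h p (Or.inr hp)) q hq
  | imp A B ihA ihB =>
      intro h q hq
      rcases hq with hq | hq
      · exact ihA (fun p hp => h p (Or.inl hp)) q hq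
      · exact ihB (fun p hp => h p (Or.inr hp)) q hq

/-- One-sided splitting: if `Γ ++ Ξ ⊢ A ⊗ B` where every atom of `Ξ` and of `B` is
foreign to `Γ ++ [A]`, then `Γ ⊢ A`. -/
lemma split_left (Γ Ξ : List Fml) (A B : Fml)
    (h : SDeriv (Γ ++ Ξ) (A.tens B))
    (hforeign : ∀ Y ∈ Ξ ++ [B], ∀ p X, X ∈ Γ ++ [A] → X.occurs p → ¬ Y.occurs p) :
    SDeriv Γ A := by
  classical
  -- substitution killing foreign atoms
  set σ : ℕ → Fml := fun p =>
    if ∃ X ∈ Γ ++ [A], X.occurs p then Fml.atom p else Fml.unit with hσ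
  have hkeep : ∀ X ∈ Γ ++ [A], Fml.subst σ X = X := by
    intro X hX
    refine subst_eq_self X (fun p hp => ?_)
    simp only [hσ]
    rw [if_pos]
    exact ⟨X, hX, hp⟩
  have hkill : ∀ Y ∈ Ξ ++ [B], ∀ q, ¬ (Fml.subst σ Y).occurs q := by
    intro Y hY
    refine subst_const Y (fun p hp => ?_)
    have : ¬ ∃ X ∈ Γ ++ [A], X.occurs p := by
      rintro ⟨X, hX, hXp⟩
      exact hforeign Y hY p X hX hXp hp
    simp only [hσ]
    rw [if_neg this]
  have h1 := h.subst σ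
  have hΓ : Γ.map (Fml.subst σ) = Γ := by
    conv_rhs => rw [← List.map_id Γ]
    exact List.map_congr_left (fun X hX => hkeep X (by simp [hX]))
  have hA : Fml.subst σ A = A := hkeep A (by simp)
  set B' := Fml.subst σ B with hB'
  have h2 : SDeriv (Γ ++ Ξ.map (Fml.subst σ)) (A.tens B') := by
    have : (Γ ++ Ξ).map (Fml.subst σ) = Γ ++ Ξ.map (Fml.subst σ) := by
      rw [List.map_append, hΓ]
    rw [this] at h1
    simpa [Fml.subst, hA] using h1
  -- move the constant part to the front and remove it
  have h3 : SDeriv (Ξ.map (Fml.subst σ) ++ Γ) (A.tens B') :=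
    SDeriv.perm (List.perm_append_comm) h2
  have h4 : SDeriv Γ (A.tens B') := by
    refine removeAll _ ?_ Γ _ h3
    intro C hC
    rcases List.mem_map.1 hC with ⟨Y, hY, rfl⟩
    exact (const_lemma _ (hkill Y (by simp [hY]))).1
  -- extract A
  have hBconst := const_lemma B' (hkill B (by simp))
  have h5 : SDeriv [A, B'] A := SDeriv.exch (Γ := []) (hBconst.2 [A] A (SDeriv.ax A))
  have h6 : SDeriv [A.tens B'] A := SDeriv.tensL (Γ := []) h5
  have := SDeriv.cut (Δ := []) (Θ := []) h4 h6
  simpa using this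

/-- If some permutation of `Γ, Δ` derives `A ⊗ B` in `S` and `Γ, A` is prime to
`Δ, B`, then `Γ ⊢ A` and `Δ ⊢ B` are derivable in `S`. -/
theorem tensor_splitting (Γ Δ Φ : List Fml) (A B : Fml)
    (hperm : Φ.Perm (Γ ++ Δ)) (h : SDeriv Φ (A.tens B))
    (hprime : PrimeTo (Γ ++ [A]) (Δ ++ [B])) :
    SDeriv Γ A ∧ SDeriv Δ B := by
  have h0 : SDeriv (Γ ++ Δ) (A.tens B) := SDeriv.perm hperm h
  constructor
  · exact split_left Γ Δ A B h0
      (fun Y hY p X hX hXp => hprime p X hX Y hY hXp)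
  · -- symmetric: B ⊗ A from Δ ++ Γ, using commutativity of tens via a direct argument
    have h1 : SDeriv (Δ ++ Γ) (B.tens A) := by
      have hBA : SDeriv [A, B] (B.tens A) := by
        have := SDeriv.tensR (SDeriv.ax B) (SDeriv.ax A)
        exact SDeriv.exch (Γ := []) this
      have hAB : SDeriv [A.tens B] (B.tens A) := SDeriv.tensL (Γ := []) hBA
      have := SDeriv.cut (Δ := []) (Θ := []) h0 hAB
      have h2 : SDeriv (Γ ++ Δ) (B.tens A) := by simpa using this
      exact SDeriv.perm List.perm_append_comm h2
    exact split_left Δ Γ B A h1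
      (fun Y hY p X hX hXp => fun hYp => hprime p Y hY X hX hYp hXp)
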